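/- Let β and γ be real numbers with 0 ≤ γ ≤ β < 1 and β + γ > 1. Then there is a constant C = C(β,γ) such that for all k₁, k₂ ∈ ℤ one has ∑_{n∈ℤ} ⟨n-k₁⟩^{-β} ⟨n-k₂⟩^{-γ} ≤ C ⟨k₁-k₂⟩^{1-β-γ}. -/

import Mathlib

/-- Japanese bracket `⟨x⟩ = (1+x²)^{1/2}`. -/
noncomputable def jb (x : ℝ) : ℝ := Real.sqrt (1 + x ^ 2)

open Real
open scoped ENNReal NNReal



lemma jb_pos (x : ℝ) : 0 < jb x := Real.sqrt_pos.2 (by positivity)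

lemma one_le_jb (x : ℝ) : 1 ≤ jb x := by
  have h : Real.sqrt 1 ≤ Real.sqrt (1 + x ^ 2) := Real.sqrt_le_sqrt (by nlinarith [sq_nonneg x])
  rwa [Real.sqrt_one] at h

lemma abs_le_jb (x : ℝ) : |x| ≤ jb x := by
  rw [jb, ← Real.sqrt_sq_eq_abs]
  exact Real.sqrt_le_sqrt (by nlinarith)

lemma jb_le_one_add_abs (x : ℝ) : jb x ≤ 1 + |x| := by
  rw [jb]
  have h : Real.sqrt ((1 + |x|)^2) = 1 + |x| := Real.sqrt_sq (by positivity)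
  rw [← h]
  exact Real.sqrt_le_sqrt (by nlinarith [abs_nonneg x, sq_abs x])

lemma jb_neg (x : ℝ) : jb (-x) = jb x := by simp [jb]

lemma jb_triangle (x y : ℝ) : jb x ≤ jb y + jb (x - y) := by
  have e1 : jb y ^ 2 = 1 + y ^ 2 := Real.sq_sqrt (by positivity)
  have e2 : jb (x - y) ^ 2 = 1 + (x - y) ^ 2 := Real.sq_sqrt (by positivity)
  have e3 : y * (x - y) ≤ jb y * jb (x - y) := by
    calc y * (x - y) ≤ |y * (x - y)| := le_abs_self _
    _ = |y| * |x - y| := abs_mul _ _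
    _ ≤ jb y * jb (x - y) :=
        mul_le_mul (abs_le_jb y) (abs_le_jb (x - y)) (abs_nonneg _) (jb_pos y).le
  have h2 : 1 + x ^ 2 ≤ (jb y + jb (x - y)) ^ 2 := by nlinarith
  calc jb x = Real.sqrt (1 + x ^ 2) := rfl
  _ ≤ Real.sqrt ((jb y + jb (x - y)) ^ 2) := Real.sqrt_le_sqrt h2
  _ = jb y + jb (x - y) := Real.sqrt_sq (add_nonneg (jb_pos y).le (jb_pos _).le)

lemma tele1 {p : ℝ} (hp0 : 0 < p) (hp1 : p ≤ 1) {a : ℝ} (ha : 0 ≤ a) :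
    p * (a + 1) ^ (p - 1) ≤ (a + 1) ^ p - a ^ p := by
  have hb : (0:ℝ) < a + 1 := by linarith
  have hab : a / (a + 1) = 1 + (a / (a + 1) - 1) := by ring
  have hs : -1 ≤ a / (a + 1) - 1 := by
    have : 0 ≤ a / (a + 1) := by positivity
    linarith
  have key : (a / (a + 1)) ^ p ≤ 1 + p * (a / (a + 1) - 1) := by
    nth_rewrite 1 [hab]
    exact rpow_one_add_le_one_add_mul_self hs hp0.le hp1
  have e1 : a ^ p = (a + 1) ^ p * (a / (a + 1)) ^ p := by
    rw [← Real.mul_rpow hb.le (by positivity)]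
    congr 1; field_simp
  have e2 : (a + 1) ^ p * (a / (a + 1) - 1) = -((a + 1) ^ (p - 1)) := by
    have h3 : (a + 1) ^ (p - 1) = (a + 1) ^ p / (a + 1) := by
      rw [Real.rpow_sub hb, Real.rpow_one]
    rw [h3]; field_simp; ring
  have hbp : (0:ℝ) < (a + 1) ^ p := rpow_pos_of_pos hb _
  have h5 := mul_le_mul_of_nonneg_left key hbp.le
  nlinarith [h5, e1, e2]

lemma tele2 {q : ℝ} (hq : 0 < q) {a : ℝ} (ha : 1 ≤ a) :
    q * (a + 1) ^ (-q - 1) ≤ a ^ (-q) - (a + 1) ^ (-q) := by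
  have ha0 : (0:ℝ) < a := by linarith
  have hb : (0:ℝ) < a + 1 := by linarith
  have main : (a + 1) ^ (-q) * (1 + q / (a + 1)) ≤ a ^ (-q) := by
    have e1 : a ^ (-q) = (a + 1) ^ (-q) * (a / (a + 1)) ^ (-q) := by
      rw [← Real.mul_rpow hb.le (by positivity)]
      congr 1; field_simp
    have ht : (0:ℝ) < a / (a + 1) := by positivity
    rcases le_or_gt 1 q with h1 | h1
    · have e2 : (a / (a + 1)) ^ (-q) = ((a + 1) / a) ^ q := by
        rw [Real.rpow_neg ht.le, ← Real.inv_rpow ht.le, inv_div]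
      have hber : 1 + q * (1 / a) ≤ (1 + 1 / a) ^ q := by
        apply one_add_mul_self_le_rpow_one_add _ h1
        have : (0:ℝ) ≤ 1 / a := by positivity
        linarith
      have e3 : (a + 1) / a = 1 + 1 / a := by field_simp
      have h4 : 1 + q / (a + 1) ≤ 1 + q * (1 / a) := by
        have h6 : q / (a + 1) ≤ q / a := by gcongr <;> linarith
        rw [mul_one_div]; linarith
      rw [e1, e2, e3]
      exact mul_le_mul_of_nonneg_left (h4.trans hber) (rpow_nonneg hb.le _)
    · have hs : -1 ≤ a / (a + 1) - 1 := by
        have : 0 ≤ a / (a + 1) := by positivity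
        linarith
      have key : (a / (a + 1)) ^ q ≤ 1 - q / (a + 1) := by
        have hab : a / (a + 1) = 1 + (a / (a + 1) - 1) := by ring
        have h2 : (a / (a + 1)) ^ q ≤ 1 + q * (a / (a + 1) - 1) := by
          nth_rewrite 1 [hab]
          exact rpow_one_add_le_one_add_mul_self hs hq.le h1.le
        have e4 : a / (a + 1) - 1 = -(1 / (a + 1)) := by field_simp; ring
        rw [e4] at h2
        calc (a / (a + 1)) ^ q ≤ 1 + q * -(1 / (a + 1)) := h2
        _ = 1 - q / (a + 1) := by ring
      have hpos : (0:ℝ) < 1 - q / (a + 1) := by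
        have : q / (a + 1) < 1 := by
          rw [div_lt_one hb]; linarith
        linarith
      have hinv : (1 - q / (a + 1))⁻¹ ≤ (a / (a + 1)) ^ (-q) := by
        rw [Real.rpow_neg ht.le]
        gcongr
      have hinv2 : 1 + q / (a + 1) ≤ (1 - q / (a + 1))⁻¹ := by
        rw [← one_div, le_div_iff₀ hpos]
        nlinarith [sq_nonneg (q / (a + 1))]
      rw [e1]
      exact mul_le_mul_of_nonneg_left (hinv2.trans hinv) (rpow_nonneg hb.le _)
  have e5 : (a + 1) ^ (-q) * (q / (a + 1)) = q * (a + 1) ^ (-q - 1) := by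
    have h7 : (a + 1) ^ (-q - 1) = (a + 1) ^ (-q) / (a + 1) := by
      rw [Real.rpow_sub hb, Real.rpow_one]
    rw [h7]; ring
  nlinarith [main, e5]

lemma sum_pow_le {σ : ℝ} (h0 : 0 ≤ σ) (h1 : σ < 1) (M : ℕ) :
    ∑ j ∈ Finset.range M, ((j : ℝ) + 1) ^ (-σ) ≤ (M : ℝ) ^ (1 - σ) / (1 - σ) := by
  have hp : 0 < 1 - σ := by linarith
  have key : ∀ j : ℕ, (1 - σ) * ((j : ℝ) + 1) ^ (-σ)
      ≤ ((j : ℝ) + 1) ^ (1 - σ) - (j : ℝ) ^ (1 - σ) := by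
    intro j
    have := tele1 hp (by linarith) (Nat.cast_nonneg j : (0:ℝ) ≤ j)
    have he : (1 - σ) - 1 = -σ := by ring
    rwa [he] at this
  have tele : ∑ j ∈ Finset.range M, (((j : ℝ) + 1) ^ (1 - σ) - (j : ℝ) ^ (1 - σ))
      = (M : ℝ) ^ (1 - σ) - (0 : ℝ) ^ (1 - σ) := by
    have := Finset.sum_range_sub (fun j : ℕ => ((j : ℝ)) ^ (1 - σ)) M
    simpa using this
  have hsum : (1 - σ) * ∑ j ∈ Finset.range M, ((j : ℝ) + 1) ^ (-σ)
      ≤ (M : ℝ) ^ (1 - σ) := by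
    rw [Finset.mul_sum]
    calc ∑ j ∈ Finset.range M, (1 - σ) * ((j : ℝ) + 1) ^ (-σ)
        ≤ ∑ j ∈ Finset.range M, (((j : ℝ) + 1) ^ (1 - σ) - (j : ℝ) ^ (1 - σ)) :=
          Finset.sum_le_sum (fun j _ => key j)
      _ = (M : ℝ) ^ (1 - σ) - (0 : ℝ) ^ (1 - σ) := tele
      _ ≤ (M : ℝ) ^ (1 - σ) := by
          rw [Real.zero_rpow hp.ne']; simp
  rw [le_div_iff₀ hp]
  linarith [hsum]

lemma tail_tsum_le {q : ℝ} (hq : 0 < q) {a : ℝ} (ha : 1 ≤ a) :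
    ∑' j : ℕ, ENNReal.ofReal ((a + 1 + (j : ℝ)) ^ (-(q + 1)))
      ≤ ENNReal.ofReal (a ^ (-q) / q) := by
  apply Summable.tsum_le_of_sum_le ENNReal.summable
  intro s
  classical
  obtain ⟨N, hN⟩ : ∃ N, s ⊆ Finset.range N := ⟨(s.sup id) + 1, fun x hx =>
    Finset.mem_range.2 (Nat.lt_succ_of_le (Finset.le_sup (f := id) hx))⟩
  calc ∑ j ∈ s, ENNReal.ofReal ((a + 1 + (j : ℝ)) ^ (-(q + 1)))
      ≤ ∑ j ∈ Finset.range N, ENNReal.ofReal ((a + 1 + (j : ℝ)) ^ (-(q + 1))) :=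
        Finset.sum_le_sum_of_subset hN
    _ = ENNReal.ofReal (∑ j ∈ Finset.range N, (a + 1 + (j : ℝ)) ^ (-(q + 1))) :=
        (ENNReal.ofReal_sum_of_nonneg (fun i _ => by positivity)).symm
    _ ≤ ENNReal.ofReal (a ^ (-q) / q) := by
        apply ENNReal.ofReal_le_ofReal
        have key : ∀ j : ℕ, (a + 1 + (j : ℝ)) ^ (-(q + 1))
            ≤ ((a + (j : ℝ)) ^ (-q) - (a + 1 + (j : ℝ)) ^ (-q)) / q := by
          intro j
          have h := tele2 hq (by linarith [Nat.cast_nonneg (α := ℝ) j] : 1 ≤ a + (j : ℝ))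
          rw [le_div_iff₀ hq]
          have he : a + (j : ℝ) + 1 = a + 1 + (j : ℝ) := by ring
          have he2 : -q - 1 = -(q + 1) := by ring
          rw [he, he2] at h
          linarith [h]
        have tele : ∑ j ∈ Finset.range N, ((a + (j : ℝ)) ^ (-q) - (a + 1 + (j : ℝ)) ^ (-q))
            = a ^ (-q) - (a + (N : ℝ)) ^ (-q) := by
          have h8 := Finset.sum_range_sub' (fun j : ℕ => (a + (j : ℝ)) ^ (-q)) N
          have h9 : ∀ j : ℕ, (a + 1 + (j : ℝ)) ^ (-q) = (a + ((j + 1 : ℕ) : ℝ)) ^ (-q) := by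
            intro j; push_cast; ring_nf
          calc ∑ j ∈ Finset.range N, ((a + (j : ℝ)) ^ (-q) - (a + 1 + (j : ℝ)) ^ (-q))
              = ∑ j ∈ Finset.range N,
                  ((a + (j : ℝ)) ^ (-q) - (a + ((j + 1 : ℕ) : ℝ)) ^ (-q)) :=
                Finset.sum_congr rfl (fun j _ => by rw [h9])
            _ = (a + ((0 : ℕ) : ℝ)) ^ (-q) - (a + (N : ℝ)) ^ (-q) := h8
            _ = a ^ (-q) - (a + (N : ℝ)) ^ (-q) := by norm_num
        calc ∑ j ∈ Finset.range N, (a + 1 + (j : ℝ)) ^ (-(q + 1))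
            ≤ ∑ j ∈ Finset.range N, ((a + (j : ℝ)) ^ (-q) - (a + 1 + (j : ℝ)) ^ (-q)) / q :=
              Finset.sum_le_sum (fun j _ => key j)
          _ = (∑ j ∈ Finset.range N, ((a + (j : ℝ)) ^ (-q) - (a + 1 + (j : ℝ)) ^ (-q))) / q := by
              rw [Finset.sum_div]
          _ = (a ^ (-q) - (a + (N : ℝ)) ^ (-q)) / q := by rw [tele]
          _ ≤ a ^ (-q) / q := by
              gcongr
              have : (0:ℝ) ≤ (a + (N : ℝ)) ^ (-q) := rpow_nonneg (by positivity) _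
              linarith

set_option maxHeartbeats 1000000 in
lemma tsum_int_le {f : ℤ → ENNReal} {g : ℕ → ENNReal} (h : ∀ n : ℤ, f n ≤ g n.natAbs) :
    ∑' n : ℤ, f n ≤ g 0 + 2 * ∑' j : ℕ, g (j + 1) := by
  rw [tsum_of_nat_of_neg_add_one (f := f) ENNReal.summable ENNReal.summable]
  have h3 : ∑' n : ℕ, g n = g 0 + ∑' n : ℕ, g (n + 1) := by
    have := Summable.sum_add_tsum_nat_add' (f := g) (k := 1) ENNReal.summable
    simpa using this.symm
  have h1 : ∑' n : ℕ, f n ≤ g 0 + ∑' n : ℕ, g (n + 1) := by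
    rw [← h3]
    exact ENNReal.tsum_le_tsum (fun n => by simpa using h n)
  have h2 : ∑' n : ℕ, f (-(n + 1)) ≤ ∑' n : ℕ, g (n + 1) := by
    apply ENNReal.tsum_le_tsum
    intro n
    have e : ((-((n : ℤ) + 1) : ℤ)).natAbs = n + 1 := by omega
    have h' := h (-((n : ℤ) + 1))
    rw [e] at h'
    exact h'
  calc ∑' n : ℕ, f n + ∑' n : ℕ, f (-(n + 1))
      ≤ (g 0 + ∑' n : ℕ, g (n + 1)) + ∑' n : ℕ, g (n + 1) := add_le_add h1 h2
    _ = g 0 + 2 * ∑' j : ℕ, g (j + 1) := by ring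

lemma cast_natAbs_eq (n : ℤ) : ((n.natAbs : ℕ) : ℝ) = |(n : ℝ)| := by
  simp [Nat.cast_natAbs]

lemma cast_max_le_jb (n : ℤ) : ((max 1 n.natAbs : ℕ) : ℝ) ≤ jb (n : ℝ) := by
  rw [Nat.cast_max]
  apply max_le
  · exact_mod_cast one_le_jb (n : ℝ)
  · rw [cast_natAbs_eq]
    exact abs_le_jb (n : ℝ)

lemma S1 {σ : ℝ} (h0 : 0 ≤ σ) (h1 : σ < 1) :
    ∃ C : ℝ, 0 < C ∧ ∀ R : ℝ, 1 ≤ R →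
      (∑' n : ℤ, if jb (n : ℝ) < R then ENNReal.ofReal (jb (n : ℝ) ^ (-σ)) else 0)
        ≤ ENNReal.ofReal (C * R ^ (1 - σ)) := by
  have hp : 0 < 1 - σ := by linarith
  refine ⟨1 + 4 / (1 - σ), by positivity, ?_⟩
  intro R hR
  have hR0 : (0:ℝ) < R := by linarith
  set g : ℕ → ENNReal :=
    fun j => if (j : ℝ) < R then ENNReal.ofReal (((max 1 j : ℕ) : ℝ) ^ (-σ)) else 0 with hg
  have hdom : ∀ n : ℤ,
      (if jb (n : ℝ) < R then ENNReal.ofReal (jb (n : ℝ) ^ (-σ)) else 0) ≤ g n.natAbs := by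
    intro n
    simp only [hg]
    by_cases hc : jb (n : ℝ) < R
    · have habs : ((n.natAbs : ℕ) : ℝ) < R := by
        rw [cast_natAbs_eq]
        exact lt_of_le_of_lt (abs_le_jb _) hc
      rw [if_pos hc, if_pos habs]
      apply ENNReal.ofReal_le_ofReal
      exact rpow_le_rpow_of_nonpos (by positivity) (cast_max_le_jb n) (by linarith)
    · rw [if_neg hc]; exact zero_le
  refine le_trans (tsum_int_le hdom) ?_
  have hg0 : g 0 = 1 := by
    simp only [hg, Nat.cast_zero]
    rw [if_pos hR0]
    norm_num
  set M := ⌈R⌉₊ with hMdef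
  have hsum : ∑' j : ℕ, g (j + 1) ≤ ENNReal.ofReal ((M : ℝ) ^ (1 - σ) / (1 - σ)) := by
    have hzero : ∀ j : ℕ, j ∉ Finset.range M → g (j + 1) = 0 := by
      intro j hj
      simp only [hg]
      apply if_neg
      push_neg
      have h3 : (M : ℝ) ≤ (j : ℝ) := by
        exact_mod_cast Nat.le_of_not_lt (fun hc => hj (Finset.mem_range.2 hc))
      have h2 := Nat.le_ceil R
      push_cast
      calc R ≤ (M : ℝ) := h2
      _ ≤ (j : ℝ) + 1 := by linarith
    rw [tsum_eq_sum hzero]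
    have hterm : ∀ j : ℕ, j ∈ Finset.range M →
        g (j + 1) ≤ ENNReal.ofReal (((j : ℝ) + 1) ^ (-σ)) := by
      intro j _
      simp only [hg]
      have hmax : (max 1 (j + 1) : ℕ) = j + 1 := max_eq_right (by omega)
      have hcast : ((j + 1 : ℕ) : ℝ) = (j : ℝ) + 1 := by push_cast; ring
      rw [hmax, hcast]
      split_ifs
      · exact le_refl _
      · exact zero_le
    calc ∑ j ∈ Finset.range M, g (j + 1)
        ≤ ∑ j ∈ Finset.range M, ENNReal.ofReal (((j : ℝ) + 1) ^ (-σ)) :=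
          Finset.sum_le_sum hterm
      _ = ENNReal.ofReal (∑ j ∈ Finset.range M, ((j : ℝ) + 1) ^ (-σ)) :=
          (ENNReal.ofReal_sum_of_nonneg (fun i _ => by positivity)).symm
      _ ≤ ENNReal.ofReal ((M : ℝ) ^ (1 - σ) / (1 - σ)) :=
          ENNReal.ofReal_le_ofReal (sum_pow_le h0 h1 M)
  calc g 0 + 2 * ∑' j : ℕ, g (j + 1)
      ≤ 1 + 2 * ENNReal.ofReal ((M : ℝ) ^ (1 - σ) / (1 - σ)) := by
        rw [hg0]
        exact add_le_add_right (mul_le_mul_right hsum 2) 1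
    _ = ENNReal.ofReal (1 + 2 * ((M : ℝ) ^ (1 - σ) / (1 - σ))) := by
        rw [ENNReal.ofReal_add (by norm_num) (by positivity),
          ENNReal.ofReal_mul (by norm_num : (0:ℝ) ≤ 2)]
        norm_num
    _ ≤ ENNReal.ofReal ((1 + 4 / (1 - σ)) * R ^ (1 - σ)) := by
        apply ENNReal.ofReal_le_ofReal
        have hM2 : (M : ℝ) ^ (1 - σ) ≤ 2 * R ^ (1 - σ) := by
          have hMR : (M : ℝ) ≤ 2 * R := by
            have := Nat.ceil_lt_add_one hR0.le
            have h9 : (M : ℝ) < R + 1 := this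
            linarith
          calc (M : ℝ) ^ (1 - σ) ≤ (2 * R) ^ (1 - σ) :=
              rpow_le_rpow (Nat.cast_nonneg M) hMR hp.le
          _ = 2 ^ (1 - σ) * R ^ (1 - σ) := mul_rpow (by norm_num) hR0.le
          _ ≤ 2 * R ^ (1 - σ) := by
              apply mul_le_mul_of_nonneg_right ?_ (by positivity)
              calc (2:ℝ) ^ (1 - σ) ≤ 2 ^ (1:ℝ) :=
                rpow_le_rpow_of_exponent_le one_le_two (by linarith)
              _ = 2 := rpow_one 2
        have h1R : 1 ≤ R ^ (1 - σ) := one_le_rpow hR hp.le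
        rw [div_eq_mul_inv, div_eq_mul_inv]
        have hi : (0:ℝ) < (1 - σ)⁻¹ := by positivity
        nlinarith [mul_le_mul_of_nonneg_right hM2 hi.le]
lemma S2 {p : ℝ} (hp1 : 1 < p) (hp2 : p < 2) :
    ∃ C : ℝ, 0 < C ∧ ∀ R : ℝ, 1/2 ≤ R →
      (∑' n : ℤ, if R ≤ jb (n : ℝ) then ENNReal.ofReal (jb (n : ℝ) ^ (-p)) else 0)
        ≤ ENNReal.ofReal (C * R ^ (1 - p)) := by
  set q := p - 1 with hqdef
  have hq : 0 < q := by rw [hqdef]; linarith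
  have hq1 : q ≤ 1 := by rw [hqdef]; linarith
  have hqp : -(q + 1) = -p := by rw [hqdef]; ring
  have he1p : 1 - p = -q := by rw [hqdef]; ring
  refine ⟨12 + 8 / q, by positivity, ?_⟩
  intro R hR
  have hR0 : (0:ℝ) < R := by linarith
  set g : ℕ → ENNReal :=
    fun j => if R ≤ 1 + (j : ℝ) then ENNReal.ofReal (((max 1 j : ℕ) : ℝ) ^ (-p)) else 0 with hg
  have hdom : ∀ n : ℤ,
      (if R ≤ jb (n : ℝ) then ENNReal.ofReal (jb (n : ℝ) ^ (-p)) else 0) ≤ g n.natAbs := by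
    intro n
    simp only [hg]
    by_cases hc : R ≤ jb (n : ℝ)
    · have habs : R ≤ 1 + ((n.natAbs : ℕ) : ℝ) := by
        rw [cast_natAbs_eq]
        exact le_trans hc (jb_le_one_add_abs _)
      rw [if_pos hc, if_pos habs]
      apply ENNReal.ofReal_le_ofReal
      exact rpow_le_rpow_of_nonpos (by positivity) (cast_max_le_jb n) (by linarith)
    · rw [if_neg hc]; exact zero_le
  refine le_trans (tsum_int_le hdom) ?_
  have hg1 : ∀ j : ℕ, g (j + 1) =
      if R ≤ (j : ℝ) + 2 then ENNReal.ofReal (((j : ℝ) + 1) ^ (-p)) else 0 := by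
    intro j
    simp only [hg]
    have hmax : (max 1 (j + 1) : ℕ) = j + 1 := max_eq_right (by omega)
    have hcast : ((j + 1 : ℕ) : ℝ) = (j : ℝ) + 1 := by push_cast; ring
    rw [hmax, hcast]
    by_cases hc : R ≤ (j : ℝ) + 2
    · rw [if_pos (by linarith), if_pos hc]
    · rw [if_neg (by intro h; exact hc (by linarith)), if_neg hc]
  have hRq : (0:ℝ) < R ^ (-q) := rpow_pos_of_pos hR0 _
  rcases le_or_gt R 4 with hR4 | hR4
  · -- R ≤ 4 : bound by the full sum
    have htail : ∑' j : ℕ, g (j + 1) ≤ ENNReal.ofReal (1 + 1 / q) := by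
      have hle : ∀ j : ℕ, g (j + 1) ≤ ENNReal.ofReal (((j : ℝ) + 1) ^ (-p)) := by
        intro j
        rw [hg1 j]
        split_ifs
        · exact le_refl _
        · exact zero_le
      calc ∑' j : ℕ, g (j + 1) ≤ ∑' j : ℕ, ENNReal.ofReal (((j : ℝ) + 1) ^ (-p)) :=
            ENNReal.tsum_le_tsum hle
        _ = ENNReal.ofReal ((((0:ℕ) : ℝ) + 1) ^ (-p))
            + ∑' j : ℕ, ENNReal.ofReal ((((j + 1 : ℕ) : ℝ) + 1) ^ (-p)) :=
            tsum_eq_zero_add' ENNReal.summable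
        _ ≤ ENNReal.ofReal 1 + ENNReal.ofReal (1 / q) := by
            apply add_le_add
            · apply ENNReal.ofReal_le_ofReal
              norm_num
            · calc ∑' j : ℕ, ENNReal.ofReal ((((j + 1 : ℕ) : ℝ) + 1) ^ (-p))
                  = ∑' j : ℕ, ENNReal.ofReal (((1:ℝ) + 1 + (j : ℝ)) ^ (-(q + 1))) := by
                    apply tsum_congr
                    intro j
                    rw [hqp]
                    congr 2
                    push_cast
                    ring
                _ ≤ ENNReal.ofReal ((1:ℝ) ^ (-q) / q) := tail_tsum_le hq (le_refl (1:ℝ))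
                _ = ENNReal.ofReal (1 / q) := by rw [one_rpow]
        _ = ENNReal.ofReal (1 + 1 / q) := by
            rw [← ENNReal.ofReal_add (by norm_num) (by positivity)]
    have hg0le : g 0 ≤ 1 := by
      simp only [hg]
      split_ifs
      · simp
      · exact zero_le
    calc g 0 + 2 * ∑' j : ℕ, g (j + 1)
        ≤ 1 + 2 * ENNReal.ofReal (1 + 1 / q) :=
          add_le_add hg0le (mul_le_mul_right htail 2)
      _ = ENNReal.ofReal (3 + 2 / q) := by
          rw [← ENNReal.ofReal_one, ← ENNReal.ofReal_ofNat 2,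
            ← ENNReal.ofReal_mul (by norm_num), ← ENNReal.ofReal_add (by norm_num) (by positivity)]
          congr 1
          ring
      _ ≤ ENNReal.ofReal ((12 + 8 / q) * R ^ (1 - p)) := by
          apply ENNReal.ofReal_le_ofReal
          rw [he1p]
          have h4q : (1:ℝ)/4 ≤ R ^ (-q) := by
            have ha : R ^ (-q) ≥ (4:ℝ) ^ (-q) :=
              rpow_le_rpow_of_nonpos hR0 hR4 (by linarith)
            have hb : (4:ℝ) ^ (-q) = ((4:ℝ) ^ q)⁻¹ := by
              rw [rpow_neg (by norm_num)]
            have hc : (4:ℝ) ^ q ≤ 4 := by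
              calc (4:ℝ) ^ q ≤ 4 ^ (1:ℝ) :=
                rpow_le_rpow_of_exponent_le (by norm_num) hq1
              _ = 4 := rpow_one 4
            have hd : (0:ℝ) < (4:ℝ) ^ q := rpow_pos_of_pos (by norm_num) _
            have : (1:ℝ)/4 ≤ ((4:ℝ) ^ q)⁻¹ := by
              rw [one_div]
              exact inv_anti₀ hd hc
            calc (1:ℝ)/4 ≤ ((4:ℝ) ^ q)⁻¹ := this
            _ = (4:ℝ) ^ (-q) := hb.symm
            _ ≤ R ^ (-q) := ha
          have hpos : (0:ℝ) < 12 + 8 / q := by positivity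
          have key := mul_le_mul_of_nonneg_left h4q hpos.le
          have e : (12 + 8 / q) * ((1:ℝ)/4) = 3 + 2 / q := by ring
          linarith [key, e]
  · -- R > 4
    have hg0 : g 0 = 0 := by
      simp only [hg]
      rw [if_neg]
      push_neg
      norm_num
      linarith
    set c := ⌈R⌉₊ with hcdef
    have hcR : R ≤ (c : ℝ) := Nat.le_ceil R
    have hcR2 : (c : ℝ) < R + 1 := Nat.ceil_lt_add_one hR0.le
    have hc5 : 5 ≤ c := by
      have : (4:ℕ) < c := by
        rw [hcdef, Nat.lt_ceil]
        norm_num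
        linarith
      omega
    set m := c - 2 with hmdef
    have hmc : m + 2 = c := by omega
    have hm3 : 3 ≤ m := by omega
    have hm1 : (1:ℝ) ≤ (m : ℝ) := by exact_mod_cast Nat.one_le_iff_ne_zero.2 (by omega)
    have hmcast : (m : ℝ) + 2 = (c : ℝ) := by exact_mod_cast congrArg (Nat.cast : ℕ → ℝ) hmc
    have htail : ∑' j : ℕ, g (j + 1) ≤ ENNReal.ofReal ((m:ℝ) ^ (-q) / q) := by
      have hsplit := Summable.sum_add_tsum_nat_add' (f := fun j : ℕ => g (j + 1)) (k := m)
        ENNReal.summable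
      have hzero : ∑ i ∈ Finset.range m, g (i + 1) = 0 := by
        apply Finset.sum_eq_zero
        intro i hi
        rw [hg1 i]
        apply if_neg
        push_neg
        have : (i : ℝ) ≤ (m:ℝ) - 1 := by
          have : (i:ℕ) < m := Finset.mem_range.1 hi
          have h7 : ((i:ℕ):ℝ) + 1 ≤ (m:ℝ) := by exact_mod_cast Nat.succ_le_of_lt this
          linarith
        linarith [hcR2, hmcast]
      have hshift : ∑' i : ℕ, g (i + m + 1) ≤ ENNReal.ofReal ((m:ℝ) ^ (-q) / q) := by
        calc ∑' i : ℕ, g (i + m + 1)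
            = ∑' i : ℕ, ENNReal.ofReal (((m:ℝ) + 1 + (i : ℝ)) ^ (-(q + 1))) := by
              apply tsum_congr
              intro i
              rw [hg1 (i + m)]
              rw [if_pos ?hcnd]
              case hcnd =>
                push_cast
                linarith [hcR, hmcast, Nat.cast_nonneg (α := ℝ) i]
              rw [hqp]
              congr 2
              push_cast
              ring
          _ ≤ ENNReal.ofReal ((m:ℝ) ^ (-q) / q) := tail_tsum_le hq hm1
      calc ∑' j : ℕ, g (j + 1)
          = ∑ i ∈ Finset.range m, g (i + 1) + ∑' i : ℕ, g (i + m + 1) := hsplit.symm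
        _ = ∑' i : ℕ, g (i + m + 1) := by rw [hzero, zero_add]
        _ ≤ ENNReal.ofReal ((m:ℝ) ^ (-q) / q) := hshift
    calc g 0 + 2 * ∑' j : ℕ, g (j + 1)
        ≤ 0 + 2 * ENNReal.ofReal ((m:ℝ) ^ (-q) / q) := by
          rw [hg0]
          exact add_le_add (le_refl 0) (mul_le_mul_right htail 2)
      _ = ENNReal.ofReal (2 * ((m:ℝ) ^ (-q) / q)) := by
          rw [zero_add, ← ENNReal.ofReal_ofNat 2, ← ENNReal.ofReal_mul (by norm_num)]
      _ ≤ ENNReal.ofReal ((12 + 8 / q) * R ^ (1 - p)) := by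
          apply ENNReal.ofReal_le_ofReal
          rw [he1p]
          have hmR : R / 2 ≤ (m : ℝ) := by linarith [hcR, hmcast]
          have hm2 : (m:ℝ) ^ (-q) ≤ 2 * R ^ (-q) := by
            calc (m:ℝ) ^ (-q) ≤ (R/2) ^ (-q) :=
                rpow_le_rpow_of_nonpos (by linarith) hmR (by linarith)
              _ = R ^ (-q) / 2 ^ (-q) := div_rpow hR0.le (by norm_num) _
              _ = R ^ (-q) * 2 ^ q := by
                  rw [rpow_neg (by norm_num : (0:ℝ) ≤ 2), div_eq_mul_inv, inv_inv]
              _ ≤ R ^ (-q) * 2 := by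
                  apply mul_le_mul_of_nonneg_left ?_ hRq.le
                  calc (2:ℝ) ^ q ≤ 2 ^ (1:ℝ) :=
                    rpow_le_rpow_of_exponent_le (by norm_num) hq1
                  _ = 2 := rpow_one 2
              _ = 2 * R ^ (-q) := by ring
          rw [div_eq_mul_inv]
          have hi : (0:ℝ) < q⁻¹ := by positivity
          have h8 : 8 / q = 8 * q⁻¹ := by rw [div_eq_mul_inv]
          rw [h8]
          nlinarith [mul_le_mul_of_nonneg_right hm2 hi.le, hRq]

lemma key_lemma {β γ C1 C1' C2 : ℝ} (hγ0 : 0 ≤ γ) (hγβ : γ ≤ β) (hβ1 : β < 1)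
    (hβγ : 1 < β + γ) (hC1 : 0 < C1) (hC1' : 0 < C1') (hC2 : 0 < C2)
    (hS1γ : ∀ R : ℝ, 1 ≤ R →
      (∑' n : ℤ, if jb (n : ℝ) < R then ENNReal.ofReal (jb (n : ℝ) ^ (-γ)) else 0)
        ≤ ENNReal.ofReal (C1 * R ^ (1 - γ)))
    (hS1β : ∀ R : ℝ, 1 ≤ R →
      (∑' n : ℤ, if jb (n : ℝ) < R then ENNReal.ofReal (jb (n : ℝ) ^ (-β)) else 0)
        ≤ ENNReal.ofReal (C1' * R ^ (1 - β)))
    (hS2 : ∀ R : ℝ, 1/2 ≤ R →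
      (∑' n : ℤ, if R ≤ jb (n : ℝ) then ENNReal.ofReal (jb (n : ℝ) ^ (-(β + γ))) else 0)
        ≤ ENNReal.ofReal (C2 * R ^ (1 - (β + γ))))
    (k : ℤ) :
    ∑' n : ℤ, ENNReal.ofReal (jb ((n : ℝ) - (k : ℝ)) ^ (-β)) * ENNReal.ofReal (jb (n : ℝ) ^ (-γ))
      ≤ ENNReal.ofReal ((2 * C1 + 2 * C1' + 2 * 3 ^ γ * C2) * jb (k : ℝ) ^ (1 - β - γ)) := by
  have hβ0 : 0 ≤ β := hγ0.trans hγβ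
  have hγ1 : γ < 1 := lt_of_le_of_lt hγβ hβ1
  set K := jb (k : ℝ) with hK
  have hK1 : 1 ≤ K := one_le_jb _
  have hKh : (0:ℝ) < K / 2 := by linarith
  have hKpos : (0:ℝ) < K := by linarith
  -- the three majorants
  set T1 : ℤ → ℝ≥0∞ := fun n => ENNReal.ofReal ((K/2) ^ (-β)) *
    (if jb (n : ℝ) < K/2 then ENNReal.ofReal (jb (n : ℝ) ^ (-γ)) else 0) with hT1
  set H2 : ℤ → ℝ≥0∞ := fun m =>
    if jb (m : ℝ) < K/2 then ENNReal.ofReal (jb (m : ℝ) ^ (-β)) else 0 with hH2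
  set H3 : ℤ → ℝ≥0∞ := fun m =>
    if K/2 ≤ jb (m : ℝ) then ENNReal.ofReal (jb (m : ℝ) ^ (-(β + γ))) else 0 with hH3
  set T2 : ℤ → ℝ≥0∞ := fun n => ENNReal.ofReal ((K/2) ^ (-γ)) * H2 (n - k) with hT2
  set T3 : ℤ → ℝ≥0∞ := fun n => ENNReal.ofReal ((3:ℝ) ^ γ) * H3 (n - k) with hT3
  -- pointwise bound
  have hpt : ∀ n : ℤ,
      ENNReal.ofReal (jb ((n : ℝ) - (k : ℝ)) ^ (-β)) * ENNReal.ofReal (jb (n : ℝ) ^ (-γ))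
        ≤ T1 n + T2 n + T3 n := by
    intro n
    set x := jb (n : ℝ) with hx
    set y := jb ((n : ℝ) - (k : ℝ)) with hy
    have hxpos : 0 < x := jb_pos _
    have hypos : 0 < y := jb_pos _
    have ycast : jb (((n - k : ℤ)) : ℝ) = y := by
      rw [hy]; congr 1; push_cast; ring
    have htri1 : K ≤ x + y := by
      have h := jb_triangle (k : ℝ) (n : ℝ)
      have h2 : jb ((k : ℝ) - (n : ℝ)) = y := by
        rw [hy, ← jb_neg ((k:ℝ) - (n:ℝ))]; congr 1; ring
      rw [h2] at h
      linarith [h]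
    have htri2 : y ≤ x + K := by
      have h := jb_triangle ((n : ℝ) - (k : ℝ)) (n : ℝ)
      have h2 : jb ((n : ℝ) - (k : ℝ) - (n : ℝ)) = K := by
        rw [hK, ← jb_neg ((n:ℝ) - (k:ℝ) - (n:ℝ))]; congr 1; ring
      rw [h2] at h
      linarith [h]
    rcases lt_or_ge x (K/2) with hA | hA
    · -- region 1 : x small, y ≥ K/2
      have hyK : K/2 ≤ y := by linarith
      have hb : ENNReal.ofReal (y ^ (-β)) ≤ ENNReal.ofReal ((K/2) ^ (-β)) :=
        ENNReal.ofReal_le_ofReal (rpow_le_rpow_of_nonpos hKh hyK (by linarith))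
      have : ENNReal.ofReal (y ^ (-β)) * ENNReal.ofReal (x ^ (-γ)) ≤ T1 n := by
        rw [hT1]
        simp only
        rw [if_pos hA]
        exact mul_le_mul_of_nonneg_right hb (zero_le)
      calc ENNReal.ofReal (y ^ (-β)) * ENNReal.ofReal (x ^ (-γ)) ≤ T1 n := this
      _ ≤ T1 n + T2 n + T3 n := by
          exact le_add_right (le_add_right (le_refl _))
    rcases lt_or_ge y (K/2) with hB | hB
    · -- region 2 : y small, x ≥ K/2
      have hc : ENNReal.ofReal (x ^ (-γ)) ≤ ENNReal.ofReal ((K/2) ^ (-γ)) :=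
        ENNReal.ofReal_le_ofReal (rpow_le_rpow_of_nonpos hKh (by linarith) (by linarith))
      have : ENNReal.ofReal (y ^ (-β)) * ENNReal.ofReal (x ^ (-γ)) ≤ T2 n := by
        rw [hT2]
        simp only
        rw [hH2]
        simp only
        rw [ycast, if_pos hB]
        calc ENNReal.ofReal (y ^ (-β)) * ENNReal.ofReal (x ^ (-γ))
            = ENNReal.ofReal (x ^ (-γ)) * ENNReal.ofReal (y ^ (-β)) := mul_comm _ _
          _ ≤ ENNReal.ofReal ((K/2) ^ (-γ)) * ENNReal.ofReal (y ^ (-β)) :=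
              mul_le_mul_of_nonneg_right hc (zero_le)
      calc ENNReal.ofReal (y ^ (-β)) * ENNReal.ofReal (x ^ (-γ)) ≤ T2 n := this
      _ ≤ T1 n + T2 n + T3 n := by
          exact le_add_right (le_add_left (le_refl _))
    · -- region 3
      have hy3x : y ≤ 3 * x := by linarith
      have hxy3 : y / 3 ≤ x := by linarith
      have hstep : x ^ (-γ) ≤ y ^ (-γ) * 3 ^ γ := by
        calc x ^ (-γ) ≤ (y/3) ^ (-γ) :=
            rpow_le_rpow_of_nonpos (by linarith) hxy3 (by linarith)
        _ = y ^ (-γ) / 3 ^ (-γ) := div_rpow hypos.le (by norm_num) _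
        _ = y ^ (-γ) * 3 ^ γ := by
            rw [rpow_neg (by norm_num : (0:ℝ) ≤ 3), div_eq_mul_inv, inv_inv]
      have : ENNReal.ofReal (y ^ (-β)) * ENNReal.ofReal (x ^ (-γ)) ≤ T3 n := by
        rw [hT3]
        simp only
        rw [hH3]
        simp only
        rw [ycast, if_pos hB]
        calc ENNReal.ofReal (y ^ (-β)) * ENNReal.ofReal (x ^ (-γ))
            ≤ ENNReal.ofReal (y ^ (-β)) * ENNReal.ofReal (y ^ (-γ) * 3 ^ γ) :=
              mul_le_mul_of_nonneg_left (ENNReal.ofReal_le_ofReal hstep) (zero_le)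
          _ = ENNReal.ofReal (y ^ (-β) * (y ^ (-γ) * 3 ^ γ)) :=
              (ENNReal.ofReal_mul (by positivity)).symm
          _ = ENNReal.ofReal ((3:ℝ) ^ γ * y ^ (-(β + γ))) := by
              congr 1
              rw [show -(β + γ) = -β + -γ by ring, rpow_add hypos]
              ring
          _ = ENNReal.ofReal ((3:ℝ) ^ γ) * ENNReal.ofReal (y ^ (-(β + γ))) :=
              ENNReal.ofReal_mul (by positivity)
      calc ENNReal.ofReal (y ^ (-β)) * ENNReal.ofReal (x ^ (-γ)) ≤ T3 n := this
      _ ≤ T1 n + T2 n + T3 n := le_add_left (le_refl _)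
  refine le_trans (ENNReal.tsum_le_tsum hpt) ?_
  rw [ENNReal.tsum_add, ENNReal.tsum_add]
  -- half-power comparison
  have hhalfpow : (K/2) ^ (1 - β - γ) ≤ 2 * K ^ (1 - β - γ) := by
    have h1 : (K/2) ^ (1-β-γ) = K ^ (1-β-γ) / 2 ^ (1-β-γ) := div_rpow hKpos.le (by norm_num) _
    have h3 : (1:ℝ)/2 ≤ 2 ^ (1-β-γ) := by
      have : (2:ℝ) ^ (-1:ℝ) ≤ 2 ^ (1-β-γ) :=
        rpow_le_rpow_of_exponent_le one_le_two (by linarith)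
      rwa [rpow_neg_one, ← one_div] at this
    have h4 : 0 < K ^ (1-β-γ) := rpow_pos_of_pos hKpos _
    rw [h1, div_le_iff₀ (by positivity : (0:ℝ) < 2 ^ (1-β-γ))]
    nlinarith
  -- bound for T1 sum
  have hB1 : ∑' n, T1 n ≤ ENNReal.ofReal (2 * C1 * K ^ (1 - β - γ)) := by
    rw [hT1, ENNReal.tsum_mul_left]
    by_cases h2K : 1 ≤ K/2
    · calc ENNReal.ofReal ((K/2) ^ (-β)) *
          ∑' n : ℤ, (if jb (n : ℝ) < K/2 then ENNReal.ofReal (jb (n : ℝ) ^ (-γ)) else 0)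
          ≤ ENNReal.ofReal ((K/2) ^ (-β)) * ENNReal.ofReal (C1 * (K/2) ^ (1-γ)) :=
            mul_le_mul_of_nonneg_left (hS1γ (K/2) h2K) (zero_le)
        _ = ENNReal.ofReal ((K/2) ^ (-β) * (C1 * (K/2) ^ (1-γ))) :=
            (ENNReal.ofReal_mul (by positivity)).symm
        _ = ENNReal.ofReal (C1 * (K/2) ^ (1-β-γ)) := by
            congr 1
            rw [show (1-β-γ) = -β + (1-γ) by ring, rpow_add hKh]
            ring
        _ ≤ ENNReal.ofReal (2 * C1 * K ^ (1 - β - γ)) := by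
            apply ENNReal.ofReal_le_ofReal
            nlinarith [hhalfpow, hC1]
    · have hzero : ∑' n : ℤ,
          (if jb (n : ℝ) < K/2 then ENNReal.ofReal (jb (n : ℝ) ^ (-γ)) else 0) = 0 := by
        apply ENNReal.tsum_eq_zero.2
        intro n
        rw [if_neg]
        push_neg
        linarith [one_le_jb ((n:ℤ) : ℝ)]
      rw [hzero, mul_zero]
      exact zero_le
  -- bound for T2 sum
  have hB2 : ∑' n, T2 n ≤ ENNReal.ofReal (2 * C1' * K ^ (1 - β - γ)) := by
    rw [hT2, ENNReal.tsum_mul_left]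
    have hre : ∑' n : ℤ, H2 (n - k) = ∑' m : ℤ, H2 m := by
      have := Equiv.tsum_eq (Equiv.subRight k) H2
      simpa using this
    rw [hre]
    by_cases h2K : 1 ≤ K/2
    · calc ENNReal.ofReal ((K/2) ^ (-γ)) * ∑' m : ℤ, H2 m
          ≤ ENNReal.ofReal ((K/2) ^ (-γ)) * ENNReal.ofReal (C1' * (K/2) ^ (1-β)) := by
            apply mul_le_mul_of_nonneg_left ?_ (zero_le)
            rw [hH2]
            exact hS1β (K/2) h2K
        _ = ENNReal.ofReal ((K/2) ^ (-γ) * (C1' * (K/2) ^ (1-β))) :=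
            (ENNReal.ofReal_mul (by positivity)).symm
        _ = ENNReal.ofReal (C1' * (K/2) ^ (1-β-γ)) := by
            congr 1
            rw [show (1-β-γ) = -γ + (1-β) by ring, rpow_add hKh]
            ring
        _ ≤ ENNReal.ofReal (2 * C1' * K ^ (1 - β - γ)) := by
            apply ENNReal.ofReal_le_ofReal
            nlinarith [hhalfpow, hC1']
    · have hzero : ∑' m : ℤ, H2 m = 0 := by
        apply ENNReal.tsum_eq_zero.2
        intro m
        rw [hH2]
        simp only
        rw [if_neg]
        push_neg
        linarith [one_le_jb ((m:ℤ) : ℝ)]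
      rw [hzero, mul_zero]
      exact zero_le
  -- bound for T3 sum
  have hB3 : ∑' n, T3 n ≤ ENNReal.ofReal (2 * 3 ^ γ * C2 * K ^ (1 - β - γ)) := by
    rw [hT3, ENNReal.tsum_mul_left]
    have hre : ∑' n : ℤ, H3 (n - k) = ∑' m : ℤ, H3 m := by
      have := Equiv.tsum_eq (Equiv.subRight k) H3
      simpa using this
    rw [hre]
    calc ENNReal.ofReal ((3:ℝ) ^ γ) * ∑' m : ℤ, H3 m
        ≤ ENNReal.ofReal ((3:ℝ) ^ γ) * ENNReal.ofReal (C2 * (K/2) ^ (1-(β+γ))) := by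
          apply mul_le_mul_of_nonneg_left ?_ (zero_le)
          rw [hH3]
          exact hS2 (K/2) (by linarith)
      _ = ENNReal.ofReal ((3:ℝ) ^ γ * (C2 * (K/2) ^ (1-(β+γ)))) :=
          (ENNReal.ofReal_mul (by positivity)).symm
      _ ≤ ENNReal.ofReal (2 * 3 ^ γ * C2 * K ^ (1 - β - γ)) := by
          apply ENNReal.ofReal_le_ofReal
          have he : 1 - (β+γ) = 1 - β - γ := by ring
          rw [he]
          have h3γ : (0:ℝ) < 3 ^ γ := rpow_pos_of_pos (by norm_num) _
          nlinarith [hhalfpow, hC2, h3γ, mul_le_mul_of_nonneg_left hhalfpow (mul_pos h3γ hC2).le]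
  calc ∑' n, T1 n + ∑' n, T2 n + ∑' n, T3 n
      ≤ ENNReal.ofReal (2 * C1 * K ^ (1 - β - γ)) + ENNReal.ofReal (2 * C1' * K ^ (1 - β - γ))
        + ENNReal.ofReal (2 * 3 ^ γ * C2 * K ^ (1 - β - γ)) :=
        add_le_add (add_le_add hB1 hB2) hB3
    _ = ENNReal.ofReal ((2 * C1 + 2 * C1' + 2 * 3 ^ γ * C2) * K ^ (1 - β - γ)) := by
        rw [← ENNReal.ofReal_add (by positivity) (by positivity),
          ← ENNReal.ofReal_add (by positivity) (by positivity)]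
        congr 1
        ring

/-- For `0 ≤ γ ≤ β < 1` with `β + γ > 1`, there is `C = C(β,γ)` such that
for all `k₁ k₂ : ℤ`, `∑_{n∈ℤ} ⟨n-k₁⟩^{-β} ⟨n-k₂⟩^{-γ} ≤ C ⟨k₁-k₂⟩^{1-β-γ}`. -/
theorem stmt2 (β γ : ℝ) (hγ0 : 0 ≤ γ) (hγβ : γ ≤ β) (hβ1 : β < 1) (hβγ : 1 < β + γ) :
    ∃ C : ℝ, 0 < C ∧ ∀ k₁ k₂ : ℤ,
      (∑' n : ℤ, ENNReal.ofReal
          (jb ((n : ℝ) - (k₁ : ℝ)) ^ (-β) * jb ((n : ℝ) - (k₂ : ℝ)) ^ (-γ)))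
        ≤ ENNReal.ofReal (C * jb ((k₁ : ℝ) - (k₂ : ℝ)) ^ (1 - β - γ)) := by
  obtain ⟨C1, hC1, hS1γ⟩ := S1 hγ0 (lt_of_le_of_lt hγβ hβ1)
  obtain ⟨C1', hC1', hS1β⟩ := S1 (hγ0.trans hγβ) hβ1
  obtain ⟨C2, hC2, hS2⟩ := S2 hβγ (by linarith)
  refine ⟨2 * C1 + 2 * C1' + 2 * 3 ^ γ * C2, by positivity, ?_⟩
  intro k₁ k₂
  have step1 : (∑' n : ℤ, ENNReal.ofReal
        (jb ((n : ℝ) - (k₁ : ℝ)) ^ (-β) * jb ((n : ℝ) - (k₂ : ℝ)) ^ (-γ)))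
      = ∑' n : ℤ, ENNReal.ofReal (jb ((n : ℝ) - ((k₁ - k₂ : ℤ) : ℝ)) ^ (-β))
          * ENNReal.ofReal (jb ((n : ℝ)) ^ (-γ)) := by
    rw [← Equiv.tsum_eq (Equiv.addRight k₂) (fun n : ℤ => ENNReal.ofReal
        (jb ((n : ℝ) - (k₁ : ℝ)) ^ (-β) * jb ((n : ℝ) - (k₂ : ℝ)) ^ (-γ)))]
    apply tsum_congr
    intro n
    simp only [Equiv.coe_addRight]
    have e1 : (((n + k₂ : ℤ)) : ℝ) - (k₁ : ℝ) = (n : ℝ) - ((k₁ - k₂ : ℤ) : ℝ) := by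
      push_cast; ring
    have e2 : (((n + k₂ : ℤ)) : ℝ) - (k₂ : ℝ) = (n : ℝ) := by push_cast; ring
    rw [e1, e2, ENNReal.ofReal_mul (rpow_nonneg (jb_pos _).le _)]
  have e3 : jb ((k₁ : ℝ) - (k₂ : ℝ)) = jb (((k₁ - k₂ : ℤ)) : ℝ) := by
    congr 1; push_cast; ring
  rw [step1, e3]
  exact key_lemma hγ0 hγβ hβ1 hβγ hC1 hC1' hC2 hS1γ hS1β hS2 (k₁ - k₂)
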